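/- Let n > 1 and, for t ∈ ℝ, let v(t) be the 2n×2n complex matrix all of whose entries are zero except the bottom-right 4×4 block, which equals [[0,0,0,t],[0,0,-t,0],[0,t,i,0],[-t,0,0,-i]]. Then for every t ≠ 0, every real number c, and every invertible 2n×2n complex matrix P, one has P·v(t)·P⁻¹ ≠ c·v(0). In other words, for t ≠ 0 the matrix v(t) is not similar to any real scalar multiple of v(0). -/

import Mathlib

open Matrix Complex

set_option maxHeartbeats 1000000 in
/-- Let `n > 1` and, for `t : ℝ`, let `v t` be the `2n×2n` complex matrix which is
zero except for its bottom-right `4×4` block, equal to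
`[[0,0,0,t],[0,0,-t,0],[0,t,i,0],[-t,0,0,-i]]` (indices below are 0-indexed, so the
block occupies rows and columns `2n-4,…,2n-1`).  For every `t ≠ 0`, every real `c`
and every invertible complex matrix `P`, one has `P * v t * P⁻¹ ≠ c • v 0`: the
matrix `v t` is not similar to any real scalar multiple of `v 0`. -/
theorem spn_family_not_conjugate
    (n : ℕ) (hn : 1 < n)
    (v : ℝ → Matrix (Fin (2 * n)) (Fin (2 * n)) ℂ)
    (hv : ∀ t : ℝ, v t = Matrix.of fun i j : Fin (2 * n) =>
      if (i : ℕ) = 2 * n - 4 ∧ (j : ℕ) = 2 * n - 1 then (t : ℂ)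
      else if (i : ℕ) = 2 * n - 3 ∧ (j : ℕ) = 2 * n - 2 then -(t : ℂ)
      else if (i : ℕ) = 2 * n - 2 ∧ (j : ℕ) = 2 * n - 3 then (t : ℂ)
      else if (i : ℕ) = 2 * n - 2 ∧ (j : ℕ) = 2 * n - 2 then I
      else if (i : ℕ) = 2 * n - 1 ∧ (j : ℕ) = 2 * n - 4 then -(t : ℂ)
      else if (i : ℕ) = 2 * n - 1 ∧ (j : ℕ) = 2 * n - 1 then -I
      else 0) :
    ∀ t : ℝ, t ≠ 0 → ∀ c : ℝ, ∀ P : Matrix (Fin (2 * n)) (Fin (2 * n)) ℂ,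
      IsUnit P → P * v t * P⁻¹ ≠ c • v 0 := by
  intro t ht c P hP h
  have h4 : 4 ≤ 2 * n := by omega
  obtain ⟨a, hav⟩ : ∃ a : Fin (2 * n), (a : ℕ) = 2 * n - 4 := ⟨⟨_, by omega⟩, rfl⟩
  obtain ⟨b, hbv⟩ : ∃ b : Fin (2 * n), (b : ℕ) = 2 * n - 3 := ⟨⟨_, by omega⟩, rfl⟩
  obtain ⟨e, hev⟩ : ∃ e : Fin (2 * n), (e : ℕ) = 2 * n - 2 := ⟨⟨_, by omega⟩, rfl⟩
  obtain ⟨d, hdv⟩ : ∃ d : Fin (2 * n), (d : ℕ) = 2 * n - 1 := ⟨⟨_, by omega⟩, rfl⟩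
  have hab : a ≠ b := by intro hq; omega
  have hae : a ≠ e := by intro hq; omega
  have had : a ≠ d := by intro hq; omega
  have hbe : b ≠ e := by intro hq; omega
  have hbd : b ≠ d := by intro hq; omega
  have hed : e ≠ d := by intro hq; omega
  have hba := hab.symm
  have hea := hae.symm
  have hda := had.symm
  have heb := hbe.symm
  have hdb := hbd.symm
  have hde := hed.symm
  have hc1 : ∀ k : Fin (2 * n), ((k : ℕ) = 2 * n - 4) = (a = k) :=
    fun k => propext ⟨fun hk => Fin.ext (by omega), fun hk => by omega⟩
  have hc2 : ∀ k : Fin (2 * n), ((k : ℕ) = 2 * n - 3) = (b = k) :=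
    fun k => propext ⟨fun hk => Fin.ext (by omega), fun hk => by omega⟩
  have hc3 : ∀ k : Fin (2 * n), ((k : ℕ) = 2 * n - 2) = (e = k) :=
    fun k => propext ⟨fun hk => Fin.ext (by omega), fun hk => by omega⟩
  have hc4 : ∀ k : Fin (2 * n), ((k : ℕ) = 2 * n - 1) = (d = k) :=
    fun k => propext ⟨fun hk => Fin.ext (by omega), fun hk => by omega⟩
  have hrep : ∀ s : ℝ, v s =
      Matrix.single a d (s : ℂ) + Matrix.single b e (-(s : ℂ))
      + Matrix.single e b (s : ℂ) + Matrix.single e e I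
      + Matrix.single d a (-(s : ℂ)) + Matrix.single d d (-I) := by
    intro s
    rw [hv]
    ext i j
    simp only [of_apply, Matrix.add_apply, Matrix.single, hc1, hc2, hc3, hc4]
    split_ifs <;> first | ring1 | (exfalso; omega)
  have hv0 : v 0 = Matrix.single e e I + Matrix.single d d (-I) := by
    have h0 := hrep 0
    simpa using h0
  -- inverse facts
  have hPd := (Matrix.isUnit_iff_isUnit_det P).mp hP
  have h1 : P⁻¹ * P = 1 := Matrix.nonsing_inv_mul P hPd
  have h2 : P * P⁻¹ = 1 := Matrix.mul_nonsing_inv P hPd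
  have hPP : ∀ M : Matrix (Fin (2 * n)) (Fin (2 * n)) ℂ, P * (P⁻¹ * M) = M := by
    intro M; rw [← Matrix.mul_assoc, h2, Matrix.one_mul]
  have hsm : c • v 0 = (c : ℂ) • v 0 := by
    rw [← algebraMap_smul ℂ c (v 0), Complex.coe_algebraMap]
  have hvt : v t = P⁻¹ * ((c : ℂ) • v 0) * P := by
    rw [← hsm, ← h, Matrix.mul_assoc P (v t) P⁻¹, ← Matrix.mul_assoc P⁻¹ P (v t * P⁻¹),
      h1, Matrix.one_mul, Matrix.mul_assoc (v t) P⁻¹ P, h1, Matrix.mul_one]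
  have hconj : ∀ X Y : Matrix (Fin (2 * n)) (Fin (2 * n)) ℂ,
      (P⁻¹ * X * P) * (P⁻¹ * Y * P) = P⁻¹ * (X * Y) * P := by
    intro X Y
    simp only [Matrix.mul_assoc, hPP]
  have hc0 : v 0 * v 0 * v 0 = -(v 0) := by
    have hneg : ∀ (i j : Fin (2 * n)) (z : ℂ),
        Matrix.single i j (-z) = -Matrix.single i j z := by
      intro i j z
      ext i' j'
      simp only [Matrix.single, of_apply, neg_apply, of_apply]
      split_ifs <;> simp_all
    rw [hv0]
    simp only [mul_add, add_mul, single_mul_single_same,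
      single_mul_single_of_ne, hed, hde, ne_eq, not_false_eq_true,
      zero_add, add_zero, zero_mul, mul_zero]
    rw [show I * I * I = -I by simp [Complex.I_mul_I],
      show -I * -I * -I = I by simp [Complex.I_mul_I], hneg, hneg, neg_add, neg_neg]
  have hA3 : ((c : ℂ) • v 0) * ((c : ℂ) • v 0) * ((c : ℂ) • v 0)
      = (-(c : ℂ) ^ 2) • ((c : ℂ) • v 0) := by
    simp only [smul_mul_assoc, mul_smul_comm, smul_smul, hc0, smul_neg, ← neg_smul]
    congr 1
    ring
  have hkey : v t * v t * v t = (-(c : ℂ) ^ 2) • v t := by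
    conv_lhs => rw [hvt, hconj, hconj]
    rw [hvt, hA3, Matrix.mul_smul, Matrix.smul_mul]
  have hLHS : (v t * v t * v t) a a = I * (t : ℂ) ^ 2 := by
    rw [hrep t]
    simp only [mul_add, add_mul, single_mul_single_same, single_mul_single_of_ne,
      hab, hae, had, hbe, hbd, hed, hba, hea, hda, heb, hdb, hde, ne_eq, not_false_eq_true,
      zero_mul, mul_zero, zero_add, add_zero]
    simp only [Matrix.add_apply, single_apply_same, single_apply_of_row_ne,
      single_apply_of_col_ne, hab, hae, had, hbe, hbd, hed, hba, hea, hda, heb,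
      hdb, hde, ne_eq, not_false_eq_true, zero_add, add_zero]
    ring
  have hRHS : ((-(c : ℂ) ^ 2) • v t) a a = 0 := by
    rw [hrep t]
    simp only [Matrix.smul_apply, Matrix.add_apply, single_apply_of_row_ne,
      single_apply_of_col_ne, hab, hae, had, hbe, hbd, hed, hba, hea, hda, heb,
      hdb, hde, ne_eq, not_false_eq_true, zero_add, add_zero, smul_eq_mul, mul_zero]
  have hfin : I * (t : ℂ) ^ 2 = 0 := by rw [← hLHS, hkey, hRHS]
  have ht0 : t = 0 := by
    simpa [Complex.I_ne_zero, pow_eq_zero_iff, Complex.ofReal_eq_zero] using hfin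
  exact ht ht0
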